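/- If X is Gamma-distributed with shape m and mean λ (PDF f(x) = (m/λ)^m x^{m−1} e^{−m x/λ}/Γ(m) on x ≥ 0), then E[log₂(1 + Ω X/δ²)] = (Ω/(δ² Γ(m) ln 2)) ∫₀^∞ Γ(m, m x/λ)/(1 + Ω x/δ²) dx. -/

import Mathlib

open MeasureTheory Set
open scoped ENNReal

noncomputable def upperGamma (m y : ℝ) : ℝ := ∫ t in Set.Ioi y, t ^ (m - 1) * Real.exp (-t)

lemma ug_integrable {m : ℝ} (hm : 0 < m) {y : ℝ} (hy : 0 ≤ y) :
    IntegrableOn (fun t : ℝ => t ^ (m - 1) * Real.exp (-t)) (Set.Ioi y) := by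
  have h := (Real.GammaIntegral_convergent hm).mono_set (Set.Ioi_subset_Ioi hy)
  exact h.congr_fun (fun x _ => mul_comm _ _) measurableSet_Ioi

lemma ug_nonneg {m : ℝ} (hm : 0 < m) {y : ℝ} (hy : 0 ≤ y) : 0 ≤ upperGamma m y := by
  refine setIntegral_nonneg measurableSet_Ioi fun t ht => ?_
  have h0 : 0 ≤ t := le_trans hy (le_of_lt ht)
  positivity

lemma ug_anti {m : ℝ} (hm : 0 < m) {y z : ℝ} (hy : 0 ≤ y) (hyz : y ≤ z) :
    upperGamma m z ≤ upperGamma m y := by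
  refine setIntegral_mono_set (ug_integrable hm hy) ?_ ?_
  · filter_upwards [ae_restrict_mem measurableSet_Ioi] with t ht
    have h0 : 0 ≤ t := le_trans hy (le_of_lt ht)
    positivity
  · exact HasSubset.Subset.eventuallyLE (Set.Ioi_subset_Ioi hyz)

lemma survival (m k : ℝ) (hm : 0 < m) (hk : 0 < k) {t : ℝ} (ht : 0 ≤ t) :
    ∫ x in Set.Ioi t, k ^ m * x ^ (m - 1) * Real.exp (-(k * x)) = upperGamma m (k * t) := by
  have hcong : ∀ x ∈ Set.Ioi t, k ^ m * x ^ (m - 1) * Real.exp (-(k * x))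
      = k * ((k * x) ^ (m - 1) * Real.exp (-(k * x))) := by
    intro x hx
    have hx0 : 0 ≤ x := le_trans ht (le_of_lt hx)
    rw [Real.mul_rpow hk.le hx0]
    rw [show k ^ m = k * k ^ (m - 1) by
      rw [show m = 1 + (m - 1) by ring, Real.rpow_add hk, Real.rpow_one]
      ring_nf]
    ring
  rw [setIntegral_congr_fun measurableSet_Ioi hcong, integral_const_mul,
    integral_comp_mul_left_Ioi (fun u => u ^ (m - 1) * Real.exp (-u)) t hk,
    smul_eq_mul, ← mul_assoc, mul_inv_cancel₀ hk.ne', one_mul, upperGamma]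

lemma f_integrableOn (m k C : ℝ) (hm : 0 < m) (hk : 0 < k) {t : ℝ} (ht : 0 ≤ t) :
    IntegrableOn (fun x : ℝ => k ^ m * x ^ (m - 1) * Real.exp (-(k * x)) / C) (Set.Ioi t) := by
  have h0 : IntegrableOn (fun u : ℝ => u ^ (m - 1) * Real.exp (-u)) (Set.Ioi (k * t)) :=
    ug_integrable hm (by positivity)
  have h1 : IntegrableOn (fun x : ℝ => (k * x) ^ (m - 1) * Real.exp (-(k * x))) (Set.Ioi t) := by
    have := (integrableOn_Ioi_comp_mul_left_iff (fun u : ℝ => u ^ (m - 1) * Real.exp (-u)) t hk).mpr h0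
    exact this
  have h2 : IntegrableOn (fun x : ℝ => k ^ m / k ^ (m-1) / C * ((k * x) ^ (m - 1) * Real.exp (-(k * x)))) (Set.Ioi t) := h1.const_mul _
  refine h2.congr_fun (fun x hx => ?_) measurableSet_Ioi
  have hx0 : 0 < x := lt_of_le_of_lt ht hx
  dsimp only
  rw [Real.mul_rpow hk.le hx0.le]
  have hkm : (0:ℝ) < k ^ (m - 1) := Real.rpow_pos_of_pos hk _
  rw [show k ^ m / k ^ (m-1) / C * (k ^ (m-1) * x ^ (m-1) * Real.exp (-(k*x)))
      = k ^ m / k ^ (m-1) * k ^ (m-1) * x ^ (m-1) * Real.exp (-(k*x)) / C from by ring,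
    div_mul_cancel₀ _ hkm.ne']

lemma survival_lint (m k C : ℝ) (hm : 0 < m) (hk : 0 < k) (hC : 0 < C) {t : ℝ} (ht : 0 ≤ t) :
    ∫⁻ x in Set.Ioi t, ENNReal.ofReal (k ^ m * x ^ (m - 1) * Real.exp (-(k * x)) / C)
      = ENNReal.ofReal (upperGamma m (k * t) / C) := by
  rw [← ofReal_integral_eq_lintegral_ofReal (f_integrableOn m k C hm hk ht) ?_]
  · rw [integral_div, survival m k hm hk ht]
  · filter_upwards [ae_restrict_mem measurableSet_Ioi] with x hx
    have hx0 : 0 ≤ x := le_trans ht (le_of_lt hx)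
    positivity

lemma log_eq_lint {c : ℝ} (hc : 0 < c) {x : ℝ} (hx : 0 ≤ x) :
    ENNReal.ofReal (Real.log (1 + c * x))
      = ∫⁻ t in Set.Ioc 0 x, ENNReal.ofReal (c / (1 + c * t)) := by
  have hpos : ∀ t : ℝ, 0 ≤ t → (0:ℝ) < 1 + c * t := fun t ht => by positivity
  have hderiv : ∀ t ∈ Set.uIcc (0:ℝ) x,
      HasDerivAt (fun u => Real.log (1 + c * u)) (c / (1 + c * t)) t := by
    intro t ht
    rw [Set.uIcc_of_le hx] at ht
    have h1 : HasDerivAt (fun u : ℝ => 1 + c * u) c t := by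
      simpa using ((hasDerivAt_id t).const_mul c).const_add 1
    exact h1.log (hpos t ht.1).ne'
  have hcont : ContinuousOn (fun t : ℝ => c / (1 + c * t)) (Set.uIcc 0 x) := by
    apply ContinuousOn.div continuousOn_const (by fun_prop)
    intro t ht; rw [Set.uIcc_of_le hx] at ht; exact (hpos t ht.1).ne'
  have hii : IntervalIntegrable (fun t : ℝ => c / (1 + c * t)) volume 0 x :=
    hcont.intervalIntegrable
  have heq : Real.log (1 + c * x) = ∫ t in Set.Ioc 0 x, c / (1 + c * t) := by
    have h := intervalIntegral.integral_eq_sub_of_hasDerivAt hderiv hii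
    rw [intervalIntegral.integral_of_le hx] at h
    rw [h]; simp
  rw [heq, ← ofReal_integral_eq_lintegral_ofReal
    ((intervalIntegrable_iff_integrableOn_Ioc_of_le hx).mp hii) ?_]
  filter_upwards [ae_restrict_mem measurableSet_Ioc] with t ht
  have := hpos t ht.1.le
  positivity

open ENNReal in
lemma tonelli_core (φ f : ℝ → ℝ) (hφ : Measurable φ) (hf : Measurable f) :
    ∫⁻ x in Set.Ioi 0, ENNReal.ofReal (f x) * ∫⁻ t in Set.Ioc 0 x, ENNReal.ofReal (φ t)
      = ∫⁻ t in Set.Ioi 0, ENNReal.ofReal (φ t) * ∫⁻ x in Set.Ioi t, ENNReal.ofReal (f x) := by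
  set s : Set (ℝ × ℝ) := {p | 0 < p.2 ∧ p.2 ≤ p.1} with hs_def
  have hs : MeasurableSet s :=
    (measurableSet_lt measurable_const measurable_snd).inter
      (measurableSet_le measurable_snd measurable_fst)
  set g : ℝ × ℝ → ℝ≥0∞ := fun p => ENNReal.ofReal (φ p.2) * ENNReal.ofReal (f p.1) with hg_def
  have hgm : Measurable g :=
    ((hφ.comp measurable_snd).ennreal_ofReal).mul ((hf.comp measurable_fst).ennreal_ofReal)
  have hswap : ∫⁻ x, ∫⁻ t, s.indicator g (x, t) = ∫⁻ t, ∫⁻ x, s.indicator g (x, t) := by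
    exact lintegral_lintegral_swap (Measurable.aemeasurable (by
      exact (hgm.indicator hs).comp measurable_id))
  have hL : ∫⁻ x, ∫⁻ t, s.indicator g (x, t)
      = ∫⁻ x in Set.Ioi 0, ENNReal.ofReal (f x) * ∫⁻ t in Set.Ioc 0 x, ENNReal.ofReal (φ t) := by
    have h1 : ∀ x : ℝ, ∫⁻ t, s.indicator g (x, t)
        = Set.indicator (Set.Ioi 0) (fun x => ENNReal.ofReal (f x) *
            ∫⁻ t in Set.Ioc 0 x, ENNReal.ofReal (φ t)) x := by
      intro x
      have h2 : (fun t => s.indicator g (x, t))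
          = (Set.Ioc 0 x).indicator (fun t => ENNReal.ofReal (φ t) * ENNReal.ofReal (f x)) := by
        funext t
        by_cases h : 0 < t ∧ t ≤ x
        · simp [Set.indicator, hs_def, hg_def, Set.mem_Ioc, h]
        · simp [Set.indicator, hs_def, hg_def, Set.mem_Ioc, h]
      rw [h2, lintegral_indicator measurableSet_Ioc]
      by_cases hx : 0 < x
      · rw [Set.indicator_of_mem (Set.mem_Ioi.mpr hx), lintegral_mul_const' _ _ ENNReal.ofReal_ne_top, mul_comm]
      · rw [Set.indicator_of_notMem (fun hc => hx (Set.mem_Ioi.mp hc)), Set.Ioc_eq_empty hx, Measure.restrict_empty,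
          lintegral_zero_measure]
    simp_rw [h1]
    rw [lintegral_indicator measurableSet_Ioi]
  have hR : ∫⁻ t, ∫⁻ x, s.indicator g (x, t)
      = ∫⁻ t in Set.Ioi 0, ENNReal.ofReal (φ t) * ∫⁻ x in Set.Ioi t, ENNReal.ofReal (f x) := by
    have h1 : ∀ t : ℝ, ∫⁻ x, s.indicator g (x, t)
        = Set.indicator (Set.Ioi 0) (fun t => ENNReal.ofReal (φ t) *
            ∫⁻ x in Set.Ioi t, ENNReal.ofReal (f x)) t := by
      intro t
      by_cases ht : 0 < t
      · have h2 : (fun x => s.indicator g (x, t))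
            = (Set.Ici t).indicator (fun x => ENNReal.ofReal (φ t) * ENNReal.ofReal (f x)) := by
          funext x
          by_cases h : t ≤ x
          · simp [Set.indicator, hs_def, hg_def, Set.mem_Ici, h, ht]
          · simp [Set.indicator, hs_def, hg_def, Set.mem_Ici, h, ht]
        rw [h2, lintegral_indicator measurableSet_Ici, Set.indicator_of_mem (Set.mem_Ioi.mpr ht),
          ← MeasureTheory.restrict_Ioi_eq_restrict_Ici,
          lintegral_const_mul' _ _ ENNReal.ofReal_ne_top]
      · have h2 : (fun x => s.indicator g (x, t)) = fun _ => 0 := by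
          funext x
          have : (x, t) ∉ s := fun hmem => ht hmem.1
          simp [Set.indicator_of_notMem this]
        rw [h2, lintegral_const, zero_mul, Set.indicator_of_notMem (fun hc => ht (Set.mem_Ioi.mp hc))]
    simp_rw [h1]
    rw [lintegral_indicator measurableSet_Ioi]
  rw [← hL, hswap, hR]

/-- If `X` is Gamma-distributed with shape `m` and mean `λ`
(PDF `f(x) = (m/λ)^m x^{m−1} e^{−m x/λ}/Γ(m)` on `x ≥ 0`), then
`E[log₂(1 + Ω X/δ²)] = (Ω/(δ² Γ(m) ln 2)) ∫₀^∞ Γ(m, m x/λ)/(1 + Ω x/δ²) dx`. -/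
theorem stmt4 {α : Type*} [MeasurableSpace α] (μ : Measure α) [IsProbabilityMeasure μ]
    (m lam Om d : ℝ) (hm : 0 < m) (hlam : 0 < lam) (hOm : 0 < Om) (hd : 0 < d)
    (X : α → ℝ) (hX : Measurable X)
    (hlaw : μ.map X = volume.withDensity (fun x =>
      ENNReal.ofReal (if 0 ≤ x then
        (m / lam) ^ m * x ^ (m - 1) * Real.exp (-(m * x / lam)) / Real.Gamma m else 0)))
    (hint : Integrable (fun ω => Real.logb 2 (1 + Om * X ω / d)) μ) :
    ∫ ω, Real.logb 2 (1 + Om * X ω / d) ∂μ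
      = (Om / (d * Real.Gamma m * Real.log 2)) *
        ∫ x in Set.Ioi (0:ℝ), upperGamma m (m * x / lam) / (1 + Om * x / d) := by
  clear hint
  have hG : 0 < Real.Gamma m := Real.Gamma_pos_of_pos hm
  have hlog2 : 0 < Real.log 2 := Real.log_pos one_lt_two
  set c : ℝ := Om / d with hc_def
  have hc : 0 < c := div_pos hOm hd
  set k : ℝ := m / lam with hk_def
  have hk : 0 < k := div_pos hm hlam
  have hrw1 : ∀ x : ℝ, Om * x / d = c * x := fun x => by rw [hc_def]; ring
  have hrw2 : ∀ x : ℝ, m * x / lam = k * x := fun x => by rw [hk_def]; ring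
  simp only [hrw1, hrw2] at hlaw ⊢
  -- measurability facts
  have hgm : Measurable fun x : ℝ => Real.logb 2 (1 + c * x) := by
    simp only [Real.logb]
    exact (Real.measurable_log.comp (by fun_prop)).div_const _
  set f : ℝ → ℝ := fun x => k ^ m * x ^ (m - 1) * Real.exp (-(k * x)) / Real.Gamma m
    with hf_def
  set ρ : ℝ → ℝ≥0∞ := fun x => ENNReal.ofReal (if 0 ≤ x then f x else 0) with hρ_def
  have hρm : Measurable ρ := by
    apply Measurable.ennreal_ofReal
    apply Measurable.ite (measurableSet_le measurable_const measurable_id) _ measurable_const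
    fun_prop
  -- step 1 : move to the pushforward, then to Lebesgue with density
  rw [← integral_map hX.aemeasurable hgm.aestronglyMeasurable, hlaw]
  have hnn : 0 ≤ᵐ[volume.withDensity ρ] fun x : ℝ => Real.logb 2 (1 + c * x) := by
    have hIio : (volume.withDensity ρ) (Set.Iio 0) = 0 := by
      rw [withDensity_apply ρ measurableSet_Iio]
      have hz : ∀ᵐ x ∂(volume : Measure ℝ), x ∈ Set.Iio 0 → ρ x = 0 :=
        ae_of_all _ fun x hx => by simp [hρ_def, if_neg (not_le.mpr (Set.mem_Iio.mp hx))]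
      rw [setLIntegral_congr_fun_ae measurableSet_Iio hz, lintegral_zero]
    refine (ae_iff).mpr (measure_mono_null ?_ hIio)
    intro x hx
    simp only [Set.mem_setOf_eq, Pi.zero_apply, not_le] at hx
    by_contra hx0
    simp only [Set.mem_Iio, not_lt] at hx0
    have : (0:ℝ) ≤ Real.logb 2 (1 + c * x) :=
      Real.logb_nonneg one_lt_two (by nlinarith)
    linarith
  rw [integral_eq_lintegral_of_nonneg_ae hnn hgm.aestronglyMeasurable,
    lintegral_withDensity_eq_lintegral_mul volume hρm hgm.ennreal_ofReal]
  simp only [Pi.mul_apply]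
  -- the main lintegral computation
  have hkey : ∫⁻ x, ρ x * ENNReal.ofReal (Real.logb 2 (1 + c * x))
      = ENNReal.ofReal (c / Real.Gamma m * (Real.log 2)⁻¹) *
        ∫⁻ x in Set.Ioi (0:ℝ), ENNReal.ofReal (upperGamma m (k * x) / (1 + c * x)) := by
    have hind : (fun x : ℝ => ρ x * ENNReal.ofReal (Real.logb 2 (1 + c * x)))
        = (Set.Ioi (0:ℝ)).indicator
            (fun x => ρ x * ENNReal.ofReal (Real.logb 2 (1 + c * x))) := by
      funext x
      by_cases hx : 0 < x
      · rw [Set.indicator_of_mem (Set.mem_Ioi.mpr hx)]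
      · rw [Set.indicator_of_notMem (fun hcmem => hx (Set.mem_Ioi.mp hcmem))]
        rcases (not_lt.mp hx).lt_or_eq with h | h
        · simp [hρ_def, if_neg (not_le.mpr h)]
        · subst h; simp
    rw [hind, lintegral_indicator measurableSet_Ioi]
    have hstep : ∀ x ∈ Set.Ioi (0:ℝ),
        ρ x * ENNReal.ofReal (Real.logb 2 (1 + c * x))
          = ENNReal.ofReal ((Real.log 2)⁻¹) *
              (ENNReal.ofReal (f x) * ∫⁻ t in Set.Ioc 0 x, ENNReal.ofReal (c / (1 + c * t))) := by
      intro x hx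
      have hx0 : (0:ℝ) < x := hx
      have hρx : ρ x = ENNReal.ofReal (f x) := by rw [hρ_def]; simp [if_pos hx0.le]
      have hlogb : Real.logb 2 (1 + c * x) = Real.log (1 + c * x) * (Real.log 2)⁻¹ := by
        rw [Real.logb, div_eq_mul_inv]
      rw [hρx, hlogb, ENNReal.ofReal_mul (Real.log_nonneg (by nlinarith)),
        log_eq_lint hc hx0.le]
      ring
    rw [setLIntegral_congr_fun_ae measurableSet_Ioi (ae_of_all _ hstep),
      lintegral_const_mul' _ _ ENNReal.ofReal_ne_top,
      tonelli_core (fun t => c / (1 + c * t)) f (by fun_prop) (by fun_prop)]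
    have hstep2 : ∀ t ∈ Set.Ioi (0:ℝ),
        ENNReal.ofReal (c / (1 + c * t)) * ∫⁻ x in Set.Ioi t, ENNReal.ofReal (f x)
          = ENNReal.ofReal (c / Real.Gamma m) *
              ENNReal.ofReal (upperGamma m (k * t) / (1 + c * t)) := by
      intro t ht
      have ht0 : (0:ℝ) < t := ht
      have hsurv := survival_lint m k (Real.Gamma m) hm hk hG ht0.le
      rw [hf_def]
      have h1 : (0:ℝ) < 1 + c * t := by positivity
      rw [hsurv, ← ENNReal.ofReal_mul (div_nonneg hc.le h1.le),
        ← ENNReal.ofReal_mul (div_nonneg hc.le hG.le),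
        div_mul_div_comm, div_mul_div_comm, mul_comm (1 + c * t) (Real.Gamma m)]
    rw [setLIntegral_congr_fun_ae measurableSet_Ioi (ae_of_all _ hstep2),
      lintegral_const_mul' _ _ ENNReal.ofReal_ne_top, ← mul_assoc,
      ← ENNReal.ofReal_mul (inv_nonneg.mpr hlog2.le)]
    congr 2
    ring
  rw [hkey]
  -- rewrite the RHS Bochner integral as a lower integral
  have hmeasRHS : AEStronglyMeasurable (fun x => upperGamma m (k * x) / (1 + c * x))
      (volume.restrict (Set.Ioi (0:ℝ))) := by
    have hanti : Antitone fun x : ℝ => upperGamma m (max (k * x) 0) := by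
      intro x y hxy
      exact ug_anti hm (le_max_right _ _)
        (max_le_max (mul_le_mul_of_nonneg_left hxy hk.le) le_rfl)
    have hmeas : Measurable fun x : ℝ => upperGamma m (max (k * x) 0) / (1 + c * x) :=
      hanti.measurable.div (by fun_prop)
    refine hmeas.aestronglyMeasurable.congr ?_
    filter_upwards [ae_restrict_mem measurableSet_Ioi] with x hx
    have : max (k * x) 0 = k * x := max_eq_left (mul_nonneg hk.le (le_of_lt hx))
    rw [this]
  have hnnRHS : 0 ≤ᵐ[volume.restrict (Set.Ioi (0:ℝ))]
      fun x => upperGamma m (k * x) / (1 + c * x) := by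
    filter_upwards [ae_restrict_mem measurableSet_Ioi] with x hx
    have hx0 : (0:ℝ) < x := hx
    exact div_nonneg (ug_nonneg hm (by positivity)) (by positivity)
  rw [integral_eq_lintegral_of_nonneg_ae hnnRHS hmeasRHS, ENNReal.toReal_mul,
    ENNReal.toReal_ofReal
      (mul_nonneg (div_nonneg hc.le hG.le) (inv_nonneg.mpr hlog2.le))]
  congr 1
  rw [hc_def]
  field_simp
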